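/- Let R₁,…,R_L ⊆ Ω be pairwise disjoint measurable sets, each with P₀(R_l) = Δ, where 0 < Δ < 1/2. Then the chi-square divergence of the uniform mixture of conditional product measures from P₀ⁿ is bounded: ∫_{Ωⁿ} ( (1/L)·∑_{l=1}^L F_{R_l} − 1 )² dP₀ⁿ ≤ (1/L)·exp(nΔ/(1−Δ)) + n·Δ²/((1−Δ)·√(1−2Δ)). -/

import Mathlib

open MeasureTheory

lemma prod_indicator_eq {Ω : Type*} (n : ℕ) (T : Set Ω) (x : Fin n → Ω) :
    ∏ i, T.indicator (fun _ => (1:ℝ)) (x i)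
      = (Set.univ.pi fun _ : Fin n => T).indicator (fun _ => (1:ℝ)) x := by
  by_cases h : ∀ i, x i ∈ T
  · rw [Set.indicator_of_mem (Set.mem_univ_pi.mpr h)]
    exact Finset.prod_eq_one fun i _ => Set.indicator_of_mem (h i) _
  · push_neg at h
    obtain ⟨i, hi⟩ := h
    rw [Set.indicator_of_notMem (by
      intro hx
      exact hi (Set.mem_univ_pi.mp hx i))]
    exact Finset.prod_eq_zero (Finset.mem_univ i) (Set.indicator_of_notMem hi _)

lemma indicator_mul_indicator' {X : Type*} (A B : Set X) (x : X) :
    A.indicator (fun _ => (1:ℝ)) x * B.indicator (fun _ => (1:ℝ)) x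
      = (A ∩ B).indicator (fun _ => (1:ℝ)) x := by
  by_cases hA : x ∈ A <;> by_cases hB : x ∈ B <;>
    simp [Set.indicator_apply, hA, hB]

theorem chi_square_mixture_bound {Ω : Type*} [MeasurableSpace Ω]
    (P₀ : Measure Ω) [IsProbabilityMeasure P₀]
    (n : ℕ) (hn : 1 ≤ n)
    (L : ℕ) (hL : 1 ≤ L)
    (R : Fin L → Set Ω) (hR : ∀ l, MeasurableSet (R l))
    (hdisj : Pairwise fun l₁ l₂ => Disjoint (R l₁) (R l₂))
    (Δ : ℝ) (hΔ0 : 0 < Δ) (hΔ1 : Δ < 1/2)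
    (hPR : ∀ l, P₀ (R l) = ENNReal.ofReal Δ)
    (F : Fin L → (Fin n → Ω) → ℝ)
    (hF : ∀ l x, F l x = ((1 - Δ)^n)⁻¹ * ∏ i, Set.indicator (R l)ᶜ (fun _ => (1:ℝ)) (x i)) :
    (∫ x, ((1 / (L:ℝ)) * ∑ l, F l x - 1)^2 ∂(Measure.pi fun _ : Fin n => P₀))
      ≤ (1 / (L:ℝ)) * Real.exp (n * Δ / (1 - Δ))
        + n * Δ^2 / ((1 - Δ) * Real.sqrt (1 - 2*Δ)) := by
  set μ : Measure (Fin n → Ω) := Measure.pi fun _ : Fin n => P₀ with hμ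
  have hΔ1' : Δ < 1 := by linarith
  have h1Δ : (0:ℝ) < 1 - Δ := by linarith
  have h12Δ : (0:ℝ) < 1 - 2*Δ := by linarith
  have hLpos : (0:ℝ) < L := by exact_mod_cast hL
  set c : ℝ := ((1 - Δ)^n)⁻¹ with hc
  have hc0 : 0 < c := by positivity
  set A : Fin L → Set (Fin n → Ω) := fun l => Set.univ.pi fun _ => (R l)ᶜ with hA
  have hAmeas : ∀ l, MeasurableSet (A l) :=
    fun l => MeasurableSet.univ_pi fun _ => (hR l).compl
  -- measures of the sets
  have hPRc : ∀ l, P₀ (R l)ᶜ = ENNReal.ofReal (1 - Δ) := by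
    intro l
    rw [measure_compl (hR l) (measure_ne_top _ _), hPR l, measure_univ,
      ENNReal.ofReal_sub 1 hΔ0.le, ENNReal.ofReal_one]
  have hμA : ∀ l, (μ (A l)).toReal = (1 - Δ)^n := by
    intro l
    rw [hA, hμ, Measure.pi_pi]
    simp [hPRc l, Finset.prod_const, ENNReal.toReal_pow, ENNReal.toReal_ofReal h1Δ.le]
  have hμAA : ∀ l m, l ≠ m → (μ (A l ∩ A m)).toReal = (1 - 2*Δ)^n := by
    intro l m hlm
    have hsets : A l ∩ A m = Set.univ.pi fun _ : Fin n => ((R l)ᶜ ∩ (R m)ᶜ) := by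
      simp only [hA]; exact Set.pi_inter_distrib.symm
    have hP : P₀ ((R l)ᶜ ∩ (R m)ᶜ) = ENNReal.ofReal (1 - 2*Δ) := by
      rw [← Set.compl_union, measure_compl ((hR l).union (hR m)) (measure_ne_top _ _),
        measure_union (hdisj hlm) (hR m), hPR l, hPR m, measure_univ,
        ← ENNReal.ofReal_add hΔ0.le hΔ0.le,
        show Δ + Δ = 2*Δ by ring,
        ← ENNReal.ofReal_one, ← ENNReal.ofReal_sub 1 (by linarith)]
    rw [hsets, hμ, Measure.pi_pi]
    simp [hP, Finset.prod_const, ENNReal.toReal_pow, ENNReal.toReal_ofReal h12Δ.le]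
  -- integrability
  have hint2 : Integrable (fun x => ∑ l, (A l).indicator (fun _ => (1:ℝ)) x) μ :=
    integrable_finset_sum _ fun l _ =>
      (integrable_const (1:ℝ)).indicator (hAmeas l)
  have hint1 : Integrable
      (fun x => ∑ l, ∑ m, (A l ∩ A m).indicator (fun _ => (1:ℝ)) x) μ :=
    integrable_finset_sum _ fun l _ => integrable_finset_sum _ fun m _ =>
      (integrable_const (1:ℝ)).indicator ((hAmeas l).inter (hAmeas m))
  -- compute the integral
  have hI1 : ∫ x, (∑ l, ∑ m, (A l ∩ A m).indicator (fun _ => (1:ℝ)) x) ∂μ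
      = ∑ l : Fin L, ∑ m : Fin L, (μ (A l ∩ A m)).toReal := by
    rw [integral_finset_sum _ (fun l _ => integrable_finset_sum _ fun m _ =>
      (integrable_const (1:ℝ)).indicator ((hAmeas l).inter (hAmeas m)))]
    refine Finset.sum_congr rfl fun l _ => ?_
    rw [integral_finset_sum _ (fun m _ =>
      (integrable_const (1:ℝ)).indicator ((hAmeas l).inter (hAmeas m)))]
    exact Finset.sum_congr rfl fun m _ =>
      integral_indicator_one ((hAmeas l).inter (hAmeas m))
  have hI2 : ∫ x, (∑ l, (A l).indicator (fun _ => (1:ℝ)) x) ∂μ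
      = ∑ l : Fin L, (μ (A l)).toReal := by
    rw [integral_finset_sum _ (fun l _ =>
      (integrable_const (1:ℝ)).indicator (hAmeas l))]
    exact Finset.sum_congr rfl fun l _ => integral_indicator_one (hAmeas l)
  have hpt : (fun x => ((1 / (L:ℝ)) * ∑ l, F l x - 1)^2)
      = fun x => (c^2/(L:ℝ)^2) * (∑ l, ∑ m, (A l ∩ A m).indicator (fun _ => (1:ℝ)) x)
        - (2*c/(L:ℝ)) * (∑ l, (A l).indicator (fun _ => (1:ℝ)) x) + 1 := by
    funext x
    have hFg : ∀ l, F l x = c * (A l).indicator (fun _ => (1:ℝ)) x := by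
      intro l
      rw [hF l x, prod_indicator_eq]
    have hs : (∑ l, F l x) = c * ∑ l, (A l).indicator (fun _ => (1:ℝ)) x := by
      rw [Finset.mul_sum]
      exact Finset.sum_congr rfl fun l _ => hFg l
    have hsq : (∑ l, (A l).indicator (fun _ => (1:ℝ)) x)^2
        = ∑ l, ∑ m, (A l ∩ A m).indicator (fun _ => (1:ℝ)) x := by
      rw [sq, Finset.sum_mul_sum]
      exact Finset.sum_congr rfl fun l _ => Finset.sum_congr rfl fun m _ =>
        indicator_mul_indicator' _ _ _
    rw [hs, ← hsq]
    ring
  have key : (∫ x, ((1 / (L:ℝ)) * ∑ l, F l x - 1)^2 ∂μ)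
      = (c^2/(L:ℝ)^2) * (∑ l : Fin L, ∑ m : Fin L, (μ (A l ∩ A m)).toReal)
        - (2*c/(L:ℝ)) * (∑ l : Fin L, (μ (A l)).toReal) + 1 := by
    have hintB : Integrable (fun x =>
        (c^2/(L:ℝ)^2) * (∑ l, ∑ m, (A l ∩ A m).indicator (fun _ => (1:ℝ)) x)) μ :=
      hint1.const_mul _
    have hintC : Integrable (fun x =>
        (2*c/(L:ℝ)) * (∑ l, (A l).indicator (fun _ => (1:ℝ)) x)) μ :=
      hint2.const_mul _
    have hintD : Integrable (fun x =>
        (c^2/(L:ℝ)^2) * (∑ l, ∑ m, (A l ∩ A m).indicator (fun _ => (1:ℝ)) x)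
          - (2*c/(L:ℝ)) * (∑ l, (A l).indicator (fun _ => (1:ℝ)) x)) μ :=
      hintB.sub hintC
    rw [hpt, integral_add hintD (integrable_const 1), integral_sub hintB hintC,
      integral_const_mul, integral_const_mul, hI1, hI2, integral_const]
    simp
  -- evaluate the sums
  have hsum2 : ∑ l : Fin L, (μ (A l)).toReal = (L:ℝ) * (1-Δ)^n := by
    simp [hμA, Finset.sum_const, Finset.card_univ, mul_comm]
  have hsum1 : ∑ l : Fin L, ∑ m : Fin L, (μ (A l ∩ A m)).toReal
      = (L:ℝ) * ((1-Δ)^n + ((L:ℝ)-1) * (1-2*Δ)^n) := by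
    have hrow : ∀ l : Fin L, ∑ m : Fin L, (μ (A l ∩ A m)).toReal
        = (1-Δ)^n + ((L:ℝ)-1) * (1-2*Δ)^n := by
      intro l
      rw [← Finset.add_sum_erase _ _ (Finset.mem_univ l)]
      congr 1
      · rw [Set.inter_self]; exact hμA l
      · rw [Finset.sum_congr rfl
          (fun m hm => hμAA l m (Ne.symm (Finset.ne_of_mem_erase hm))),
          Finset.sum_const, Finset.card_erase_of_mem (Finset.mem_univ l),
          Finset.card_univ, Fintype.card_fin, nsmul_eq_mul]
        congr 1
        push_cast [hL]
        ring
    rw [Finset.sum_congr rfl fun l _ => hrow l, Finset.sum_const,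
      Finset.card_univ, Fintype.card_fin, nsmul_eq_mul]
  -- key arithmetic facts
  have hca : c * (1-Δ)^n = 1 := inv_mul_cancel₀ (by positivity)
  have hexp : c ≤ Real.exp ((n:ℝ) * Δ / (1 - Δ)) := by
    have h1 : (1-Δ)⁻¹ ≤ Real.exp (Δ/(1-Δ)) := by
      have h2 : (1-Δ)⁻¹ = Δ/(1-Δ) + 1 := by field_simp; ring
      rw [h2]
      exact Real.add_one_le_exp _
    calc c = ((1-Δ)⁻¹)^n := by rw [hc, inv_pow]
      _ ≤ (Real.exp (Δ/(1-Δ)))^n := pow_le_pow_left₀ (by positivity) h1 n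
      _ = Real.exp ((n:ℝ) * (Δ/(1-Δ))) := (Real.exp_nat_mul _ n).symm
      _ = Real.exp ((n:ℝ) * Δ / (1 - Δ)) := by rw [mul_div_assoc]
  have hcb : c^2 * (1-2*Δ)^n ≤ 1 := by
    have hr : (1-2*Δ)^n ≤ ((1-Δ)^n)^2 := by
      rw [← pow_mul, mul_comm n 2, pow_mul]
      exact pow_le_pow_left₀ h12Δ.le (by nlinarith) n
    calc c^2 * (1-2*Δ)^n ≤ c^2 * ((1-Δ)^n)^2 := by
          exact mul_le_mul_of_nonneg_left hr (by positivity)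
      _ = (c * (1-Δ)^n)^2 := by ring
      _ = 1 := by rw [hca]; norm_num
  have heps : 0 ≤ (n:ℝ) * Δ^2 / ((1 - Δ) * Real.sqrt (1 - 2*Δ)) := by positivity
  have hbn : 0 ≤ (1-2*Δ)^n := by positivity
  rw [key, hsum1, hsum2]
  have hLne : (L:ℝ) ≠ 0 := ne_of_gt hLpos
  have e1 : c^2 * (1-Δ)^n = c := by
    calc c^2 * (1-Δ)^n = c * (c * (1-Δ)^n) := by ring
      _ = c := by rw [hca, mul_one]
  have hval : (c^2/(L:ℝ)^2) * ((L:ℝ) * ((1-Δ)^n + ((L:ℝ)-1) * (1-2*Δ)^n))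
        - (2*c/(L:ℝ)) * ((L:ℝ) * (1-Δ)^n) + 1
      = c / (L:ℝ) + (((L:ℝ)-1)/(L:ℝ)) * (c^2 * (1-2*Δ)^n) - 1 := by
    calc (c^2/(L:ℝ)^2) * ((L:ℝ) * ((1-Δ)^n + ((L:ℝ)-1) * (1-2*Δ)^n))
          - (2*c/(L:ℝ)) * ((L:ℝ) * (1-Δ)^n) + 1
        = (c^2*(1-Δ)^n)/(L:ℝ) + (((L:ℝ)-1)/(L:ℝ)) * (c^2*(1-2*Δ)^n)
            - 2*(c*(1-Δ)^n) + 1 := by field_simp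
      _ = c / (L:ℝ) + (((L:ℝ)-1)/(L:ℝ)) * (c^2 * (1-2*Δ)^n) - 1 := by
          rw [e1, hca]; ring
  rw [hval]
  have h1 : c / (L:ℝ) ≤ (1 / (L:ℝ)) * Real.exp ((n:ℝ) * Δ / (1 - Δ)) := by
    rw [div_eq_mul_inv, mul_comm c, ← one_div]
    exact mul_le_mul_of_nonneg_left hexp (by positivity)
  have h2 : (((L:ℝ)-1)/(L:ℝ)) * (c^2 * (1-2*Δ)^n) ≤ 1 := by
    have hLe : ((L:ℝ)-1)/(L:ℝ) ≤ 1 := by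
      rw [div_le_one hLpos]; linarith
    have hnn : 0 ≤ ((L:ℝ)-1)/(L:ℝ) := by
      apply div_nonneg _ hLpos.le
      have : (1:ℝ) ≤ (L:ℝ) := by exact_mod_cast hL
      linarith
    calc (((L:ℝ)-1)/(L:ℝ)) * (c^2 * (1-2*Δ)^n)
        ≤ 1 * (c^2 * (1-2*Δ)^n) := mul_le_mul_of_nonneg_right hLe (by positivity)
      _ = c^2 * (1-2*Δ)^n := one_mul _
      _ ≤ 1 := hcb
  linarith
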